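/- There are exactly 16 quadruples (n, c, d, i) satisfying the Arieli–Avron–Zamansky non-deterministic truth tables whose induced logical equivalence relation satisfies, for all formulas A, B, the nine laws (1) A ∧ F ≡ F; (2) A ∨ T ≡ T; (3) A ∧ T ≡ A; (4) A ∨ F ≡ A; (5) A ∧ A ≡ A; (6) A ∨ A ≡ A; (7) A ∧ B ≡ B ∧ A; (8) A ∨ B ≡ B ∨ A; (9) ¬¬A ≡ A (with T := ¬F). -/

import Mathlib

/-- The three truth values: true, false, both-true-and-false. -/
inductive TV : Type
  | t : TV
  | f : TV
  | b : TV
  deriving DecidableEq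

/-- Formulas of LP^{→,F}: propositional variables, falsity constant,
    negation, conjunction, disjunction, implication. -/
inductive Fm : Type
  | var : ℕ → Fm
  | fls : Fm
  | neg : Fm → Fm
  | conj : Fm → Fm → Fm
  | disj : Fm → Fm → Fm
  | impl : Fm → Fm → Fm
  deriving DecidableEq

/-- The LP^{→,F} negation truth function. -/
def TV.negLP : TV → TV
  | .t => .f
  | .f => .t
  | .b => .b

/-- The LP^{→,F} conjunction truth function. -/
def TV.andLP : TV → TV → TV
  | .f, _ => .f
  | _, .f => .f
  | .t, .t => .t
  | _, _ => .b

/-- The LP^{→,F} disjunction truth function. -/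
def TV.orLP : TV → TV → TV
  | .t, _ => .t
  | _, .t => .t
  | .f, .f => .f
  | _, _ => .b

/-- The LP^{→,F} implication truth function: t if the antecedent is f,
    otherwise the value of the consequent. -/
def TV.implLP : TV → TV → TV
  | .f, _ => .t
  | _, y => y

/-- A valuation for LP^{→,F}. -/
def IsValuation (ν : Fm → TV) : Prop :=
  ν .fls = .f ∧
  (∀ A, ν (.neg A) = (ν A).negLP) ∧
  (∀ A B, ν (.conj A B) = (ν A).andLP (ν B)) ∧
  (∀ A B, ν (.disj A B) = (ν A).orLP (ν B)) ∧
  (∀ A B, ν (.impl A B) = (ν A).implLP (ν B))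

/-- Logical equivalence in LP^{→,F}. -/
def LEquiv (A B : Fm) : Prop := ∀ ν : Fm → TV, IsValuation ν → ν A = ν B

/-- The truth constant T, an abbreviation for ¬F. -/
def Fm.tru : Fm := .neg .fls

/-- A truth value is designated iff it is t or ⊤. -/
def Designated (v : TV) : Prop := v = .t ∨ v = .b

/-- Semantic logical consequence in LP^{→,F}. -/
def LPCons (Γ : Set Fm) (A : Fm) : Prop :=
  ∀ ν : Fm → TV, IsValuation ν → ((∃ B ∈ Γ, ν B = .f) ∨ Designated (ν A))

/-- Validity in LP^{→,F}. -/
def LPValid (A : Fm) : Prop := ∀ ν : Fm → TV, IsValuation ν → Designated (ν A)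

/-- A quadruple of truth functions on the three truth values. -/
structure Quad : Type where
  n : TV → TV
  c : TV → TV → TV
  d : TV → TV → TV
  i : TV → TV → TV

/-- The Arieli–Avron–Zamansky non-deterministic truth tables. -/
def AAZ (q : Quad) : Prop :=
  q.n .t = .f ∧ q.n .f = .t ∧ (q.n .b = .t ∨ q.n .b = .b) ∧
  (∀ y, q.c .f y = .f) ∧ (∀ x, q.c x .f = .f) ∧ q.c .t .t = .t ∧
  (q.c .t .b = .t ∨ q.c .t .b = .b) ∧
  (q.c .b .t = .t ∨ q.c .b .t = .b) ∧
  (q.c .b .b = .t ∨ q.c .b .b = .b) ∧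
  q.d .f .f = .f ∧ q.d .t .t = .t ∧ q.d .t .f = .t ∧ q.d .f .t = .t ∧
  (q.d .t .b = .t ∨ q.d .t .b = .b) ∧
  (q.d .b .t = .t ∨ q.d .b .t = .b) ∧
  (q.d .b .b = .t ∨ q.d .b .b = .b) ∧
  (q.d .b .f = .t ∨ q.d .b .f = .b) ∧
  (q.d .f .b = .t ∨ q.d .f .b = .b) ∧
  q.i .t .f = .f ∧ q.i .b .f = .f ∧
  q.i .f .f = .t ∧ q.i .f .t = .t ∧ q.i .t .t = .t ∧
  (q.i .f .b = .t ∨ q.i .f .b = .b) ∧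
  (q.i .t .b = .t ∨ q.i .t .b = .b) ∧
  (q.i .b .t = .t ∨ q.i .b .t = .b) ∧
  (q.i .b .b = .t ∨ q.i .b .b = .b)

/-- A valuation for the logic induced by the quadruple `q`. -/
def IsValuationQ (q : Quad) (ν : Fm → TV) : Prop :=
  ν .fls = .f ∧
  (∀ A, ν (.neg A) = q.n (ν A)) ∧
  (∀ A B, ν (.conj A B) = q.c (ν A) (ν B)) ∧
  (∀ A B, ν (.disj A B) = q.d (ν A) (ν B)) ∧
  (∀ A B, ν (.impl A B) = q.i (ν A) (ν B))

/-- Logical equivalence in the logic induced by the quadruple `q`. -/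
def LEquivQ (q : Quad) (A B : Fm) : Prop :=
  ∀ ν : Fm → TV, IsValuationQ q ν → ν A = ν B

/-- The quadruple of LP^{→,F}. -/
def lpQuad : Quad := ⟨TV.negLP, TV.andLP, TV.orLP, TV.implLP⟩

/-- Laws (1)–(9) for the logic induced by a quadruple. -/
def Laws9 (q : Quad) : Prop :=
  ∀ A B : Fm,
    LEquivQ q (A.conj .fls) .fls ∧
    LEquivQ q (A.disj Fm.tru) Fm.tru ∧
    LEquivQ q (A.conj Fm.tru) A ∧
    LEquivQ q (A.disj .fls) A ∧
    LEquivQ q (A.conj A) A ∧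
    LEquivQ q (A.disj A) A ∧
    LEquivQ q (A.conj B) (B.conj A) ∧
    LEquivQ q (A.disj B) (B.disj A) ∧
    LEquivQ q A.neg.neg A


instance : Fintype TV := ⟨{.t, .f, .b}, by intro x; cases x <;> simp⟩

/-- Evaluation of formulas under a quadruple and an assignment to variables. -/
def evalQ (q : Quad) (σ : ℕ → TV) : Fm → TV
  | .var k => σ k
  | .fls => .f
  | .neg A => q.n (evalQ q σ A)
  | .conj A B => q.c (evalQ q σ A) (evalQ q σ B)
  | .disj A B => q.d (evalQ q σ A) (evalQ q σ B)
  | .impl A B => q.i (evalQ q σ A) (evalQ q σ B)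

lemma evalQ_isValuationQ (q : Quad) (σ : ℕ → TV) : IsValuationQ q (evalQ q σ) :=
  ⟨rfl, fun _ => rfl, fun _ _ => rfl, fun _ _ => rfl, fun _ _ => rfl⟩

def bi : Bool → TV := fun x => if x then .b else .t

lemma bi_inj : Function.Injective bi := by decide

def mkI (p : Bool × Bool × Bool × Bool) : TV → TV → TV := fun x y =>
  match x, y with
  | .t, .f => .f | .b, .f => .f | .f, .f => .t | .f, .t => .t | .t, .t => .t
  | .f, .b => bi p.1 | .t, .b => bi p.2.1 | .b, .t => bi p.2.2.1 | .b, .b => bi p.2.2.2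

def Fq (p : Bool × Bool × Bool × Bool) : Quad :=
  ⟨TV.negLP, TV.andLP, TV.orLP, mkI p⟩

lemma Fq_inj : Function.Injective Fq := by
  rintro ⟨a, b, c, d⟩ ⟨a', b', c', d'⟩ h
  have hi := congrArg Quad.i h
  have h1 : bi a = bi a' := congrFun (congrFun hi .f) .b
  have h2 : bi b = bi b' := congrFun (congrFun hi .t) .b
  have h3 : bi c = bi c' := congrFun (congrFun hi .b) .t
  have h4 : bi d = bi d' := congrFun (congrFun hi .b) .b
  simp only [Prod.mk.injEq]
  exact ⟨bi_inj h1, bi_inj h2, bi_inj h3, bi_inj h4⟩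

lemma bi_or (x : Bool) : bi x = TV.t ∨ bi x = TV.b := by cases x <;> simp [bi]

lemma aaz_Fq (p : Bool × Bool × Bool × Bool) : AAZ (Fq p) :=
  ⟨rfl, rfl, Or.inr rfl,
   fun y => by cases y <;> rfl, fun x => by cases x <;> rfl, rfl,
   Or.inr rfl, Or.inr rfl, Or.inr rfl,
   rfl, rfl, rfl, rfl,
   Or.inl rfl, Or.inl rfl, Or.inr rfl, Or.inr rfl, Or.inr rfl,
   rfl, rfl, rfl, rfl, rfl,
   bi_or p.1, bi_or p.2.1, bi_or p.2.2.1, bi_or p.2.2.2⟩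

lemma laws_Fq (p : Bool × Bool × Bool × Bool) : Laws9 (Fq p) := by
  intro A B
  refine ⟨?_, ?_, ?_, ?_, ?_, ?_, ?_, ?_, ?_⟩ <;>
    rintro ν ⟨hf, hn, hc, hd, hi⟩
  all_goals
    try have ht : ν Fm.tru = .t := by rw [Fm.tru, hn, hf]; rfl
  · rw [hc, hf]; cases ν A <;> rfl
  · rw [hd, ht]; cases ν A <;> rfl
  · rw [hc, ht]; cases ν A <;> rfl
  · rw [hd, hf]; cases ν A <;> rfl
  · rw [hc]; cases ν A <;> rfl
  · rw [hd]; cases ν A <;> rfl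
  · rw [hc, hc]; cases ν A <;> cases ν B <;> rfl
  · rw [hd, hd]; cases ν A <;> cases ν B <;> rfl
  · rw [hn, hn]; cases ν A <;> rfl

lemma ncd_eq (q : Quad) (hA : AAZ q) (hL : Laws9 q) :
    q.n = TV.negLP ∧ q.c = TV.andLP ∧ q.d = TV.orLP := by
  obtain ⟨hnt, hnf, hnb, hcf, hcf', hctt, hctb, hcbt, hcbb, hdff, hdtt, hdtf, hdft,
    hdtb, hdbt, hdbb, hdbf, hdfb, hrest⟩ := hA
  have hv := evalQ_isValuationQ q (fun _ => .b)
  have L := hL (.var 0) Fm.tru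
  have Lf := hL .fls (.var 0)
  -- law 3 : c b t = b
  have h3 := L.2.2.1 _ hv
  simp only [evalQ, Fm.tru, hnf] at h3
  -- law 7 with B = tru : c t b = c b t = b
  have h7 := L.2.2.2.2.2.2.1 _ hv
  simp only [evalQ, Fm.tru, hnf] at h7
  -- law 5 : c b b = b
  have h5 := L.2.2.2.2.1 _ hv
  simp only [evalQ] at h5
  -- law 2 : d b t = t
  have h2 := L.2.1 _ hv
  simp only [evalQ, Fm.tru, hnf] at h2
  -- law 8 with B = tru : d t b = d b t
  have h8 := L.2.2.2.2.2.2.2.1 _ hv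
  simp only [evalQ, Fm.tru, hnf] at h8
  -- law 4 : d b f = b
  have h4 := L.2.2.2.1 _ hv
  simp only [evalQ] at h4
  -- law 8 with A = fls : d f b = d b f
  have h8' := Lf.2.2.2.2.2.2.2.1 _ hv
  simp only [evalQ] at h8'
  -- law 6 : d b b = b
  have h6 := L.2.2.2.2.2.1 _ hv
  simp only [evalQ] at h6
  -- law 9 : n (n b) = b
  have h9 := L.2.2.2.2.2.2.2.2 _ hv
  simp only [evalQ] at h9
  have hnb' : q.n .b = .b := by
    rcases hnb with h | h
    · rw [h, hnt] at h9; exact absurd h9 (by decide)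
    · exact h
  refine ⟨?_, ?_, ?_⟩
  · funext x; cases x
    · exact hnt
    · exact hnf
    · exact hnb'
  · funext x y; cases x <;> cases y
    · exact hctt
    · exact hcf' .t
    · exact h7.symm.trans h3
    · exact hcf .t
    · exact hcf .f
    · exact hcf .b
    · exact h3.trans (by rfl)
    · exact hcf' .b
    · exact h5.trans (by rfl)
  · funext x y; cases x <;> cases y
    · exact hdtt
    · exact hdtf
    · exact h8.symm.trans h2
    · exact hdft
    · exact hdff
    · exact h8'.trans h4
    · exact h2.trans (by rfl)
    · exact h4.trans (by rfl)
    · exact h6.trans (by rfl)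

/-- Exactly 16 quadruples satisfying the AAZ non-deterministic truth tables
    induce a logical equivalence relation satisfying laws (1)–(9). -/
theorem sixteen_quads_laws_1_to_9 :
    {q : Quad | AAZ q ∧ Laws9 q}.ncard = 16 := by
  have hset : {q : Quad | AAZ q ∧ Laws9 q} = Set.range Fq := by
    ext q
    constructor
    · rintro ⟨hA, hL⟩
      obtain ⟨hn, hc, hd⟩ := ncd_eq q hA hL
      obtain ⟨-, -, -, -, -, -, -, -, -, -, -, -, -, -, -, -, -, -, hitf, hibf, hiff,
        hift, hitt, hifb, hitb, hibt, hibb⟩ := hA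
      refine ⟨(q.i .f .b == .b, q.i .t .b == .b, q.i .b .t == .b, q.i .b .b == .b), ?_⟩
      obtain ⟨n, c, d, i⟩ := q
      dsimp only at hn hc hd hitf hibf hiff hift hitt hifb hitb hibt hibb ⊢
      simp only [Fq, Quad.mk.injEq]
      refine ⟨hn.symm, hc.symm, hd.symm, ?_⟩
      funext x y
      cases x <;> cases y
      · exact hitt.symm
      · exact hitf.symm
      · rcases hitb with h | h <;> simp [mkI, bi, h]
      · exact hift.symm
      · exact hiff.symm
      · rcases hifb with h | h <;> simp [mkI, bi, h]
      · rcases hibt with h | h <;> simp [mkI, bi, h]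
      · exact hibf.symm
      · rcases hibb with h | h <;> simp [mkI, bi, h]
    · rintro ⟨p, rfl⟩
      exact ⟨aaz_Fq p, laws_Fq p⟩
  rw [hset, ← Set.image_univ, Set.ncard_image_of_injective _ Fq_inj, Set.ncard_univ]
  simp [Nat.card_eq_fintype_card]
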